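/- In any metabelian Novikov algebra A, for all a,b,c,d,e in A, (((a*b)*c)*d)*e = (((a*b)*d)*c)*e and (((a*b)*c)*d)*e = (((a*b)*c)*e)*d. -/
import Mathlib


/-- Setting: a nonassociative (nonunital) algebra over a field of characteristic 0. -/
theorem stmt_9 {K : Type*} [Field K] [CharZero K]
    {A : Type*} [NonUnitalNonAssocRing A] [Module K A]
    [SMulCommClass K A A] [IsScalarTower K A A]
    (lcom : ∀ a b c : A, a*(b*c) = b*(a*c))
    (rsym : ∀ a b c : A, (a*b)*c - a*(b*c) = (a*c)*b - a*(c*b))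
    (metab : ∀ a b c d : A, (a*b)*(c*d) = 0) :
    ∀ a b c d e : A, (((a*b)*c)*d)*e = (((a*b)*d)*c)*e ∧
      (((a*b)*c)*d)*e = (((a*b)*c)*e)*d := by
  intro a b c d e
  have h1 : ((a*b)*c)*d = ((a*b)*d)*c := by
    have h := rsym (a*b) c d
    rw [metab a b c d, metab a b d c, sub_zero, sub_zero] at h
    exact h
  have h2 : (((a*b)*c)*d)*e = (((a*b)*c)*e)*d := by
    have h := rsym ((a*b)*c) d e
    rw [metab (a*b) c d e, metab (a*b) c e d, sub_zero, sub_zero] at h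
    exact h
  exact ⟨by rw [h1], h2⟩
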